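/- Let V be a real inner product space of finite dimension n ≥ 1, let K : V × V → V be an ℝ-bilinear map satisfying K(X,Y) = K(Y,X) and ⟨K(X,Y), Z⟩ = ⟨Y, K(X,Z)⟩ for all X, Y, Z ∈ V, and let p, q ∈ ℝ. Suppose that for every u ∈ V, the trace of the linear endomorphism Y ↦ K(u,Y) of V equals ((n·p − (1 + ‖u‖²)·q)/(2·(1 + ‖u‖²)))·⟨K(u,u), u⟩. Then either p = 0 and q = 0, or K = 0. -/

import Mathlib

open scoped RealInnerProductSpace

/-- If the trace of `Y ↦ K u Y` equals
`((n p − (1+‖u‖²) q)/(2(1+‖u‖²))) ⟪K u u, u⟫` for every `u` (the incompressibility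
condition for the geodesic flow of `g_{p,q}`), then either `p = q = 0` or `K = 0`. -/
theorem stmt_14
    {V : Type*} [NormedAddCommGroup V] [InnerProductSpace ℝ V] [FiniteDimensional ℝ V]
    (hn : 1 ≤ Module.finrank ℝ V)
    (K : V →ₗ[ℝ] V →ₗ[ℝ] V)
    (hsymm : ∀ X Y : V, K X Y = K Y X)
    (hadj : ∀ X Y Z : V, ⟪K X Y, Z⟫ = ⟪Y, K X Z⟫)
    (p q : ℝ)
    (h : ∀ u : V, LinearMap.trace ℝ V (K u) =
      (((Module.finrank ℝ V : ℝ) * p - (1 + ‖u‖ ^ 2) * q) / (2 * (1 + ‖u‖ ^ 2)))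
        * ⟪K u u, u⟫) :
    (p = 0 ∧ q = 0) ∨ K = 0 := by
  by_cases hK : ∀ u : V, ⟪K u u, u⟫ = 0
  · -- cubic form vanishes identically: polarize to get K = 0
    right
    have h1 : ∀ x y : V, ⟪K x x, y⟫ = 0 := by
      intro x y
      have e1 := hK (x + y)
      have e2 := hK (x - y)
      have s1 : K x y = K y x := hsymm x y
      simp only [map_add, map_sub, inner_add_left, inner_add_right, inner_sub_left,
        inner_sub_right, LinearMap.add_apply, LinearMap.sub_apply] at e1 e2
      have ry : ⟪K y x, y⟫ = ⟪K x y, y⟫ := by rw [s1]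
      have rxx : ⟪K y x, x⟫ = ⟪K x y, x⟫ := by rw [s1]
      have symR : ∀ a b : V, ⟪a, b⟫ = ⟪b, a⟫ := fun a b => real_inner_comm b a
      nlinarith [e1, e2, hK x, hK y, symR (K x x) y, symR (K x y) x, symR (K y y) x,
        symR (K x y) y, symR (K y x) x, symR (K y x) y, ry, rxx, hadj x x y, hadj x y x]
    have h2 : ∀ x y z : V, ⟪K x y, z⟫ = 0 := by
      intro x y z
      have e := h1 (x + y) z
      simp only [map_add, inner_add_left, LinearMap.add_apply] at e
      have s1 : K x y = K y x := hsymm x y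
      rw [← s1] at e
      linarith [h1 x z, h1 y z]
    ext x y
    simpa using inner_self_eq_zero.mp (h2 x y (K x y))
  · -- there is u with ⟪K u u, u⟫ ≠ 0 : scaling forces p = q = 0
    left
    push_neg at hK
    obtain ⟨u, hu⟩ := hK
    set n : ℝ := (Module.finrank ℝ V : ℝ) with hn'
    have hn1 : (1:ℝ) ≤ n := by rw [hn']; exact_mod_cast hn
    set a : ℝ := LinearMap.trace ℝ V (K u) with ha
    set F : ℝ := ⟪K u u, u⟫ with hF
    set s : ℝ := ‖u‖ ^ 2 with hs
    have hu0 : u ≠ 0 := by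
      rintro rfl; apply hu; simp [hF]
    have hspos : 0 < s := by
      have : 0 < ‖u‖ := norm_pos_iff.mpr hu0
      rw [hs]; positivity
    have key : ∀ t : ℝ, t * a =
        ((n * p - (1 + t^2 * s) * q) / (2 * (1 + t^2 * s))) * (t^3 * F) := by
      intro t
      have := h (t • u)
      have e1 : LinearMap.trace ℝ V (K (t • u)) = t * a := by
        rw [map_smul, map_smul]; simp [ha]
      have e2 : ‖t • u‖ ^ 2 = t ^ 2 * s := by
        rw [norm_smul]; rw [mul_pow]; simp [hs, sq_abs]
      have e3 : ⟪K (t • u) (t • u), (t • u)⟫ = t^3 * F := by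
        rw [map_smul]
        simp only [LinearMap.smul_apply, map_smul, inner_smul_left, inner_smul_right,
          RCLike.conj_to_real, hF]
        ring
      rw [e1, e2, e3] at this
      exact this
    have k1 := key 1
    have k2 := key 2
    have k3 := key 3
    have d1 : (2 * (1 + (1:ℝ)^2 * s)) ≠ 0 := by positivity
    have d2 : (2 * (1 + (2:ℝ)^2 * s)) ≠ 0 := by positivity
    have d3 : (2 * (1 + (3:ℝ)^2 * s)) ≠ 0 := by positivity
    field_simp at k1 k2 k3
    have hsq : s * (F * q) = 0 := by
      linear_combination k1/24 - 2*k2/15 + k3/40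
    have hq : q = 0 := by
      rcases mul_eq_zero.mp hsq with h' | h'
      · exact absurd h' hspos.ne'
      · rcases mul_eq_zero.mp h' with h'' | h''
        · exact absurd h'' hu
        · exact h''
    have ha0 : a = 0 := by
      linear_combination (2/3)*k1 - (1/3)*k2 + 2*s*F*hq
    have hnpF : n * p * F = 0 := by
      linear_combination (-1)*k1 + (2+2*s)*ha0 + (1+s)*F*hq
    have hp : p = 0 := by
      rcases mul_eq_zero.mp hnpF with h' | h'
      · rcases mul_eq_zero.mp h' with h'' | h''
        · linarith
        · exact h''
      · exact absurd h' hu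
    exact ⟨hp, hq⟩
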